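/- Suppose each F_{ij} is continuous and is either the identity or a deviation function D_i depending only on the row index i, and let A = {i : W_{i,Out(i)} > 0}. Then the set of c ∈ ℝ for which there exists an initial vector b₀ ∈ ℝ^n with T^t(b₀) converging to the constant vector (c,…,c) as t → ∞ equals the intersection ∩_{i∈A} Fix(D_i) (interpreted as all of ℝ when A is empty). -/

import Mathlib

open Filter
open scoped Classical

/-- with continuous entries, each of which is the identity or a
row-dependent deviation function, the consensus values attainable in the limit
of the updating process are exactly the common neutral opinions of agents with
positive out-group weight. -/
theorem stmt_2 (n : ℕ) (hn : 2 ≤ n)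
    (W : Matrix (Fin n) (Fin n) ℝ)
    (hW0 : ∀ i j, 0 ≤ W i j) (hW1 : ∀ i, ∑ j, W i j = 1)
    (F : Fin n → Fin n → ℝ → ℝ)
    (D : Fin n → ℝ → ℝ) (hD : ∀ i, D i ≠ id)
    (hF : ∀ i j, F i j = id ∨ F i j = D i)
    (hFc : ∀ i j, Continuous (F i j))
    (T : (Fin n → ℝ) → Fin n → ℝ)
    (hT : ∀ b i, T b i = ∑ j, W i j * F i j (b j))
    (A : Set (Fin n))
    (hA : A = {i | 0 < ∑ j ∈ Finset.univ.filter fun j => F i j ≠ id, W i j}) :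
    {c : ℝ | ∃ b₀ : Fin n → ℝ,
        Tendsto (fun t => T^[t] b₀) atTop (nhds fun _ => c)} =
      ⋂ i ∈ A, {x : ℝ | D i x = x} := by
  have hTc : Continuous T := by
    have hTe : T = fun b i => ∑ j, W i j * F i j (b j) := by
      funext b i; exact hT b i
    rw [hTe]
    exact continuous_pi fun i => continuous_finset_sum _ fun j _ =>
      continuous_const.mul ((hFc i j).comp (continuous_apply j))
  ext c
  simp only [Set.mem_setOf_eq, Set.mem_iInter]
  constructor
  · rintro ⟨b₀, hb⟩ i hi
    have h1 : Tendsto (fun t => T^[t + 1] b₀) atTop (nhds fun _ => c) :=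
      hb.comp (tendsto_add_atTop_nat 1)
    have h2 : Tendsto (fun t => T (T^[t] b₀)) atTop (nhds (T fun _ => c)) :=
      (hTc.tendsto _).comp hb
    have h3 : (fun t => T^[t + 1] b₀) = fun t => T (T^[t] b₀) := by
      funext t; exact Function.iterate_succ_apply' T t b₀
    rw [h3] at h1
    have hfix : T (fun _ => c) = fun _ => c := tendsto_nhds_unique h2 h1
    have hfi : ∑ j, W i j * F i j c = c := by
      have := congrFun hfix i
      rwa [hT] at this
    rw [hA] at hi
    set s := Finset.univ.filter fun j => F i j ≠ id with hs
    have hsplit : ∑ j, W i j * F i j c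
        = (∑ j ∈ s, W i j) * D i c + (∑ j ∈ sᶜ, W i j) * c := by
      rw [← Finset.sum_add_sum_compl s, Finset.sum_mul, Finset.sum_mul]
      congr 1
      · refine Finset.sum_congr rfl fun j hj => ?_
        have hjd : F i j = D i := by
          rcases hF i j with h | h
          · exact absurd h (Finset.mem_filter.mp hj).2
          · exact h
        rw [hjd]
      · refine Finset.sum_congr rfl fun j hj => ?_
        have hjid : F i j = id := by
          have hns := Finset.mem_compl.mp hj
          rw [hs] at hns
          simpa using hns
        rw [hjid]; rfl
    have hcompl : ∑ j ∈ sᶜ, W i j = 1 - ∑ j ∈ s, W i j := by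
      have := Finset.sum_add_sum_compl s (W i)
      rw [hW1 i] at this
      linarith
    rw [hsplit, hcompl] at hfi
    have h4 : (∑ j ∈ s, W i j) * D i c = (∑ j ∈ s, W i j) * c := by ring_nf; linarith
    exact mul_left_cancel₀ (ne_of_gt hi) h4
  · intro h
    refine ⟨fun _ => c, ?_⟩
    have hfix : T (fun _ => c) = fun _ => c := by
      funext i
      rw [hT]
      have hterm : ∀ j, W i j * F i j c = W i j * c := by
        intro j
        rcases hF i j with hid | hd
        · rw [hid]; rfl
        · by_cases hiA : i ∈ A
          · rw [hd, h i hiA]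
          · have h0 : W i j = 0 := by
              rw [hA] at hiA
              simp only [Set.mem_setOf_eq, not_lt] at hiA
              have hz : ∑ j ∈ Finset.univ.filter (fun j => F i j ≠ id), W i j = 0 :=
                le_antisymm hiA (Finset.sum_nonneg fun j _ => hW0 i j)
              have hjmem : j ∈ Finset.univ.filter (fun j => F i j ≠ id) := by
                simp only [Finset.mem_filter, Finset.mem_univ, true_and, hd]
                exact hD i
              exact (Finset.sum_eq_zero_iff_of_nonneg fun j _ => hW0 i j).mp hz j hjmem
            rw [h0]; ring
      rw [Finset.sum_congr rfl fun j _ => hterm j, ← Finset.sum_mul, hW1, one_mul]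
    have hall : ∀ t, T^[t] (fun _ => c) = fun _ => c := fun t =>
      Function.iterate_fixed hfix t
    simp only [hall]
    exact tendsto_const_nhds
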